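/- Let n ≥ 2, let u, v ∈ ℕⁿ with u primitive (gcd of coordinates 1) and v not a rational multiple of u, and let P, Q, R ∈ ℂ[t] with R not identically zero. Define the polynomial map f = (f₁, f₂) : (ℂ*)ⁿ → ℂ² by f₁(x) = P(x^u) and f₂(x) = Q(x^u) + x^v · R(x^u). If t₀ ∈ ℂ* satisfies R(t₀) = 0, then the fiber f⁻¹(P(t₀), Q(t₀)) contains the nonempty set {x ∈ (ℂ*)ⁿ : x^u = t₀}, which has dimension n − 1; consequently (P(t₀), Q(t₀)) ∈ C₁(f). -/
import Mathlib


open MvPolynomial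

/-- `C₁(F)`: the set of points `κ` whose fiber under `F` has codimension one in the torus,
i.e. contains an irreducible Zariski-closed subset of `(ℂ*)ⁿ` of dimension `n - 1`, namely the
(nonempty) zero set in the torus of an irreducible polynomial `h` which is not a monomial. -/
def C1 {n k : ℕ} (F : (Fin n → ℂ) → Fin k → ℂ) : Set (Fin k → ℂ) :=
  {κ | ∃ h : MvPolynomial (Fin n) ℂ, Irreducible h ∧ 2 ≤ h.support.card ∧
        (∃ x : Fin n → ℂ, (∀ i, x i ≠ 0) ∧ eval x h = 0) ∧
        ∀ x : Fin n → ℂ, (∀ i, x i ≠ 0) → eval x h = 0 → F x = κ}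

lemma bezout_finset {n : ℕ} (u : Fin n → ℕ) (s : Finset (Fin n)) :
    ∃ c : Fin n → ℤ, ∑ i ∈ s, c i * (u i : ℤ) = ((s.gcd u : ℕ) : ℤ) := by
  classical
  refine Finset.induction_on s ⟨0, by simp⟩ ?_
  intro a s ha ih
  obtain ⟨c, hc⟩ := ih
  refine ⟨fun i => if i = a then Nat.gcdA (u a) (s.gcd u)
    else Nat.gcdB (u a) (s.gcd u) * c i, ?_⟩
  rw [Finset.sum_insert ha, Finset.gcd_insert]
  simp only [if_pos rfl]
  rw [Finset.sum_congr rfl (fun i hi => by rw [if_neg (by rintro rfl; exact ha hi)])]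
  have hgg : ((gcd (u a) (s.gcd u) : ℕ) : ℤ) = (u a : ℤ) * Nat.gcdA (u a) (s.gcd u) + ((s.gcd u : ℕ) : ℤ) * Nat.gcdB (u a) (s.gcd u) := by
    exact_mod_cast Nat.gcd_eq_gcd_ab (u a) (s.gcd u)
  rw [hgg, ← hc, Finset.sum_mul]
  simp only [if_true]
  rw [Finset.sum_congr rfl (fun i _ => by ring :
    ∀ i ∈ s, Nat.gcdB (u a) (s.gcd u) * c i * (u i : ℤ) = c i * (u i : ℤ) * Nat.gcdB (u a) (s.gcd u))]
  ring

lemma zpow_finset_sum {G ι : Type*} [CommGroup G] (g : G) (s : Finset ι) (f : ι → ℤ) :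
    g ^ (∑ i ∈ s, f i) = ∏ i ∈ s, g ^ f i := by
  classical
  refine Finset.induction_on s (by simp) ?_
  intro a s ha ih
  rw [Finset.sum_insert ha, Finset.prod_insert ha, zpow_add, ih]

lemma exists_torus_point {n : ℕ} (u : Fin n → ℕ) (hu : Finset.univ.gcd u = 1)
    (t₀ : ℂ) (ht₀ : t₀ ≠ 0) :
    ∃ x : Fin n → ℂ, (∀ i, x i ≠ 0) ∧ ∏ i, x i ^ u i = t₀ := by
  obtain ⟨c, hc⟩ := bezout_finset u Finset.univ
  rw [hu] at hc
  set T : ℂˣ := Units.mk0 t₀ ht₀ with hT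
  refine ⟨fun i => ((T ^ c i : ℂˣ) : ℂ), fun i => Units.ne_zero _, ?_⟩
  have : ∏ i, ((T ^ c i : ℂˣ) : ℂ) ^ u i = ((∏ i, (T ^ c i) ^ (u i : ℤ) : ℂˣ) : ℂ) := by
    push_cast
    simp [zpow_natCast]
  rw [this]
  have h2 : ∏ i, (T ^ c i) ^ (u i : ℤ) = T ^ (∑ i, c i * (u i : ℤ)) := by
    rw [zpow_finset_sum]
    exact Finset.prod_congr rfl fun i _ => (zpow_mul T (c i) (u i)).symm
  rw [h2, hc]
  norm_num
  rfl

/-- For `f = (P(x^u), Q(x^u) + x^v R(x^u))` with `u` primitive, `v` not a rational multiple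
of `u`, and `R ≠ 0`: if `R(t₀) = 0` for some `t₀ ∈ ℂ*`, then the fiber of `(P(t₀), Q(t₀))`
contains the nonempty codimension-one set `{x ∈ (ℂ*)ⁿ : x^u = t₀}`; consequently
`(P(t₀), Q(t₀)) ∈ C₁(f)`. -/
theorem point_mem_C1_of_root {n : ℕ} (hn : 2 ≤ n) (u v : Fin n → ℕ)
    (hu : Finset.univ.gcd u = 1)
    (hv : ¬ ∃ q : ℚ, ∀ i, (v i : ℚ) = q * (u i : ℚ))
    (P Q R : Polynomial ℂ) (hR : R ≠ 0)
    (t₀ : ℂ) (ht₀ : t₀ ≠ 0) (hroot : R.eval t₀ = 0) :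
    (∃ x : Fin n → ℂ, (∀ i, x i ≠ 0) ∧ ∏ i, x i ^ u i = t₀) ∧
      (∀ x : Fin n → ℂ, (∀ i, x i ≠ 0) → ∏ i, x i ^ u i = t₀ →
        (![P.eval (∏ i, x i ^ u i),
            Q.eval (∏ i, x i ^ u i) + (∏ i, x i ^ v i) * R.eval (∏ i, x i ^ u i)] :
          Fin 2 → ℂ) = ![P.eval t₀, Q.eval t₀]) ∧
      ![P.eval t₀, Q.eval t₀] ∈ C1 (fun x : Fin n → ℂ =>
        ![P.eval (∏ i, x i ^ u i),
          Q.eval (∏ i, x i ^ u i) + (∏ i, x i ^ v i) * R.eval (∏ i, x i ^ u i)]) := by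
  have part1 := exists_torus_point u hu t₀ ht₀
  have part2 : ∀ x : Fin n → ℂ, (∀ i, x i ≠ 0) → ∏ i, x i ^ u i = t₀ →
        (![P.eval (∏ i, x i ^ u i),
            Q.eval (∏ i, x i ^ u i) + (∏ i, x i ^ v i) * R.eval (∏ i, x i ^ u i)] :
          Fin 2 → ℂ) = ![P.eval t₀, Q.eval t₀] := by
    intro x hx hxu
    rw [hxu, hroot, mul_zero, add_zero]
  refine ⟨part1, part2, ?_⟩
  -- the polynomial g = X^u - t₀
  set g : MvPolynomial (Fin n) ℂ := (∏ i, X i ^ u i) - C t₀ with hg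
  have heval : ∀ x : Fin n → ℂ, eval x g = (∏ i, x i ^ u i) - t₀ := by
    intro x; simp [hg]
  obtain ⟨x₀, hx₀, hx₀u⟩ := part1
  have hgx₀ : eval x₀ g = 0 := by rw [heval, hx₀u, sub_self]
  obtain ⟨x₁, hx₁, hx₁u⟩ := exists_torus_point u hu (2 * t₀) (by simp [ht₀])
  have hgx₁ : eval x₁ g ≠ 0 := by
    rw [heval, hx₁u]; intro h; apply ht₀; linear_combination h
  have hg0 : g ≠ 0 := fun h => hgx₁ (by rw [h, map_zero])
  have hgu : ¬ IsUnit g := fun h => (h.map (eval x₀)).ne_zero hgx₀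
  -- get an irreducible factor of g vanishing at x₀
  obtain ⟨w, hw⟩ := UniqueFactorizationMonoid.factors_prod hg0
  have hprod0 : eval x₀ ((UniqueFactorizationMonoid.factors g).prod) = 0 := by
    have : eval x₀ ((UniqueFactorizationMonoid.factors g).prod * (w : MvPolynomial (Fin n) ℂ)) = 0 := by
      rw [hw]; exact hgx₀
    rw [map_mul] at this
    rcases mul_eq_zero.mp this with h | h
    · exact h
    · exact absurd h ((w.isUnit.map (eval x₀)).ne_zero)
  rw [map_multiset_prod] at hprod0
  have hex : ∃ q ∈ UniqueFactorizationMonoid.factors g, eval x₀ q = 0 :=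
    Multiset.mem_map.mp (Multiset.prod_eq_zero_iff.mp hprod0)
  obtain ⟨y, hy_mem, hy0⟩ := hex
  have hirr : Irreducible y := UniqueFactorizationMonoid.irreducible_of_factor y hy_mem
  have hdvd : y ∣ g := UniqueFactorizationMonoid.dvd_of_mem_factors hy_mem
  -- every torus zero of y maps to the target point
  have hzero : ∀ x : Fin n → ℂ, (∀ i, x i ≠ 0) → eval x y = 0 → ∏ i, x i ^ u i = t₀ := by
    intro x hx hxy
    obtain ⟨r, hr⟩ := hdvd
    have : eval x g = 0 := by rw [hr, map_mul, hxy, zero_mul]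
    rw [heval] at this
    exact sub_eq_zero.mp this
  refine ⟨y, hirr, ?_, ⟨x₀, hx₀, hy0⟩, fun x hx hxy => part2 x hx (hzero x hx hxy)⟩
  -- y has at least two monomials
  by_contra hcard
  push_neg at hcard
  interval_cases hc : y.support.card
  · exact hirr.ne_zero (by simpa using (Finset.card_eq_zero.mp hc))
  · obtain ⟨d, hd⟩ := Finset.card_eq_one.mp hc
    have : eval x₀ y = y.coeff d * ∏ i ∈ d.support, x₀ i ^ d i := by
      rw [eval_eq, hd, Finset.sum_singleton]
    rw [this] at hy0
    rcases mul_eq_zero.mp hy0 with h | h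
    · exact (mem_support_iff.mp (hd ▸ Finset.mem_singleton_self d)) h
    · obtain ⟨i, _, hi⟩ := Finset.prod_eq_zero_iff.mp h
      exact hx₀ i (pow_eq_zero_iff'.mp hi).1
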